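/- (Theorem 2.1, exact penalty.) Let x̄ be a local minimizer of problem (P), let X be closed, let f be Lipschitz with constant L on N_δ(x̄) ∩ X for some δ > 0, let the functions g_i (i = 1,…,m) be lower semicontinuous, and let the functions h_j (j = 1,…,q) be Hadamard differentiable on X (in every direction at every point of X) and lower semicontinuous. Suppose there exists a > 0 such that d(x) ≤ −a for all x ∈ N_δ(x̄) \ S. Then there exists an integer s such that x̄ is a local minimizer of the penalty function x ↦ F(x,γ) = f(x) + γ h(x) + ½‖x − x̄‖² over G for every γ > s. -/

import Mathlib

open Filter Topology

noncomputable section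

/-- The lower Hadamard directional derivative of `f` at `x` in direction `u` with respect to
the set `S`, as an extended real number.  It is the `liminf` of the difference quotients
`(f (x + t • u') - f x) / t` as `(t, u') → (0⁺, u)` subject to `x + t • u' ∈ S`.
When `u` is not in the Bouligand tangent cone of `S` at `x` the restricting filter is the
bottom filter, and the `liminf` is `+∞`, in accordance with the convention
`∂⁻f(x;u;S) = +∞` for `u ∉ T(S,x)`. -/
def lowerHadamardDeriv {l : ℕ} (f : EuclideanSpace ℝ (Fin l) → ℝ) (S : Set (EuclideanSpace ℝ (Fin l)))
    (x u : EuclideanSpace ℝ (Fin l)) : EReal :=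
  Filter.liminf
    (fun p : ℝ × EuclideanSpace ℝ (Fin l) => (((f (x + p.1 • p.2) - f x) / p.1 : ℝ) : EReal))
    ((nhdsWithin (0 : ℝ) (Set.Ioi 0) ×ˢ nhds u) ⊓
      Filter.principal {p : ℝ × EuclideanSpace ℝ (Fin l) | x + p.1 • p.2 ∈ S})

/-- `f` is Hadamard differentiable at `x` in direction `u` with respect to `S`, with
(extended real) derivative `d`: the full limit of the difference quotients
`(f (x + t • u') - f x) / t` as `(t, u') → (0⁺, u)` subject to `x + t • u' ∈ S` exists
and equals `d`. -/
def HasHadamardDerivAt {l : ℕ} (f : EuclideanSpace ℝ (Fin l) → ℝ) (S : Set (EuclideanSpace ℝ (Fin l)))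
    (x u : EuclideanSpace ℝ (Fin l)) (d : EReal) : Prop :=
  Filter.Tendsto
    (fun p : ℝ × EuclideanSpace ℝ (Fin l) => (((f (x + p.1 • p.2) - f x) / p.1 : ℝ) : EReal))
    ((nhdsWithin (0 : ℝ) (Set.Ioi 0) ×ˢ nhds u) ⊓
      Filter.principal {p : ℝ × EuclideanSpace ℝ (Fin l) | x + p.1 • p.2 ∈ S})
    (nhds d)

/-- The Bouligand tangent cone (contingent cone) of `S` at `x`. -/
def bouligandCone {l : ℕ} (S : Set (EuclideanSpace ℝ (Fin l))) (x : EuclideanSpace ℝ (Fin l)) : Set (EuclideanSpace ℝ (Fin l)) :=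
  {u | ∃ (t : ℕ → ℝ) (v : ℕ → EuclideanSpace ℝ (Fin l)),
    (∀ k, 0 < t k) ∧ Filter.Tendsto t Filter.atTop (nhds 0) ∧
    Filter.Tendsto v Filter.atTop (nhds u) ∧ ∀ k, x + t k • v k ∈ S}

/-- `h := h₁² + ⋯ + h_q²`. -/
def hsum {l q : ℕ} (hf : Fin q → EuclideanSpace ℝ (Fin l) → ℝ) (x : EuclideanSpace ℝ (Fin l)) : ℝ :=
  ∑ j, (hf j x) ^ 2

/-- `G := {x ∈ X : gᵢ(x) ≤ 0, i = 1,…,m}`. -/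
def Gset {l m : ℕ} (X : Set (EuclideanSpace ℝ (Fin l))) (g : Fin m → EuclideanSpace ℝ (Fin l) → ℝ) : Set (EuclideanSpace ℝ (Fin l)) :=
  {x ∈ X | ∀ i, g i x ≤ 0}

/-- The feasible set `S := {x ∈ G : h(x) = 0}` of problem (P). -/
def Sset {l m q : ℕ} (X : Set (EuclideanSpace ℝ (Fin l))) (g : Fin m → EuclideanSpace ℝ (Fin l) → ℝ)
    (hf : Fin q → EuclideanSpace ℝ (Fin l) → ℝ) : Set (EuclideanSpace ℝ (Fin l)) :=
  {x ∈ Gset X g | hsum hf x = 0}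

/-- The penalty function `F(x,γ) := f(x) + γ h(x) + ½‖x - xbar‖²`. -/
def Fpen {l q : ℕ} (f : EuclideanSpace ℝ (Fin l) → ℝ) (hf : Fin q → EuclideanSpace ℝ (Fin l) → ℝ)
    (xbar : EuclideanSpace ℝ (Fin l)) (γ : ℝ) (x : EuclideanSpace ℝ (Fin l)) : ℝ :=
  f x + γ * hsum hf x + (1 / 2) * ‖x - xbar‖ ^ 2

/-- `d(x) := inf {∂⁻h(x;u;X) : u ∈ T(G,x), ‖u‖ = 1}` (an infimum in the extended reals). -/
def dFun {l m q : ℕ} (hf : Fin q → EuclideanSpace ℝ (Fin l) → ℝ) (X : Set (EuclideanSpace ℝ (Fin l)))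
    (g : Fin m → EuclideanSpace ℝ (Fin l) → ℝ) (x : EuclideanSpace ℝ (Fin l)) : EReal :=
  sInf {r : EReal | ∃ u ∈ bouligandCone (Gset X g) x, ‖u‖ = 1 ∧
    lowerHadamardDeriv (hsum hf) X x u = r}


set_option maxHeartbeats 1000000 in
theorem hadamard_cont {l : ℕ} {f : EuclideanSpace ℝ (Fin l) → ℝ} {X : Set (EuclideanSpace ℝ (Fin l))}
    {x : EuclideanSpace ℝ (Fin l)} (hx : x ∈ X)
    (H : ∃ d : EReal, HasHadamardDerivAt f X x 0 d) :
    ContinuousWithinAt f X x := by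
  obtain ⟨d, hd⟩ := H
  have hd' : Filter.Tendsto
      (fun p : ℝ × EuclideanSpace ℝ (Fin l) => (((f (x + p.1 • p.2) - f x) / p.1 : ℝ) : EReal))
      ((nhdsWithin (0 : ℝ) (Set.Ioi 0) ×ˢ nhds 0) ⊓
        Filter.principal {p : ℝ × EuclideanSpace ℝ (Fin l) | x + p.1 • p.2 ∈ X})
      (nhds d) := hd
  have hmap0 : Filter.Tendsto (fun t : ℝ => (t, (0 : EuclideanSpace ℝ (Fin l))))
      (nhdsWithin (0 : ℝ) (Set.Ioi 0))
      ((nhdsWithin (0 : ℝ) (Set.Ioi 0) ×ˢ nhds 0) ⊓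
        Filter.principal {p : ℝ × EuclideanSpace ℝ (Fin l) | x + p.1 • p.2 ∈ X}) := by
    refine Filter.tendsto_inf.2 ⟨Filter.Tendsto.prodMk tendsto_id tendsto_const_nhds, ?_⟩
    refine Filter.tendsto_principal.2 (Filter.Eventually.of_forall fun t => ?_)
    simp [hx]
  have hd0 : d = 0 := by
    have h1 := hd'.comp hmap0
    have h2 : Filter.Tendsto
        ((fun p : ℝ × EuclideanSpace ℝ (Fin l) => (((f (x + p.1 • p.2) - f x) / p.1 : ℝ) : EReal)) ∘
          (fun t : ℝ => (t, (0 : EuclideanSpace ℝ (Fin l)))))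
        (nhdsWithin (0 : ℝ) (Set.Ioi 0)) (nhds (0 : EReal)) := by
      have he : ((fun p : ℝ × EuclideanSpace ℝ (Fin l) => (((f (x + p.1 • p.2) - f x) / p.1 : ℝ) : EReal)) ∘
          (fun t : ℝ => (t, (0 : EuclideanSpace ℝ (Fin l))))) = fun _ => (0 : EReal) := by
        funext t; simp [Function.comp]
      rw [he]; exact tendsto_const_nhds
    exact tendsto_nhds_unique h1 h2
  subst hd0
  have hmem : ∀ᶠ z in nhdsWithin x (X \ {x}), z ∈ X \ {x} := eventually_mem_nhdsWithin
  have hsq : Filter.Tendsto (fun z : EuclideanSpace ℝ (Fin l) => Real.sqrt ‖z - x‖)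
      (nhdsWithin x (X \ {x})) (nhds 0) := by
    have h0 : Filter.Tendsto (fun z : EuclideanSpace ℝ (Fin l) => Real.sqrt ‖z - x‖) (nhds x)
        (nhds (Real.sqrt ‖x - x‖)) :=
      (Real.continuous_sqrt.comp (continuous_norm.comp (continuous_id.sub
        continuous_const))).tendsto x
    simpa using h0.mono_left nhdsWithin_le_nhds
  have key : Filter.Tendsto f (nhdsWithin x (X \ {x})) (nhds (f x)) := by
    have hmtend : Filter.Tendsto
        (fun z : EuclideanSpace ℝ (Fin l) =>
          ((Real.sqrt ‖z - x‖, (Real.sqrt ‖z - x‖)⁻¹ • (z - x)) : ℝ × EuclideanSpace ℝ (Fin l)))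
        (nhdsWithin x (X \ {x}))
        ((nhdsWithin (0 : ℝ) (Set.Ioi 0) ×ˢ nhds 0) ⊓
          Filter.principal {p : ℝ × EuclideanSpace ℝ (Fin l) | x + p.1 • p.2 ∈ X}) := by
      refine Filter.tendsto_inf.2 ⟨Filter.Tendsto.prodMk ?_ ?_, ?_⟩
      · rw [tendsto_nhdsWithin_iff]
        refine ⟨hsq, ?_⟩
        filter_upwards [hmem] with z hz
        exact Real.sqrt_pos.2 (norm_pos_iff.2 (sub_ne_zero.2 hz.2))
      · apply squeeze_zero_norm (a := fun z => Real.sqrt ‖z - x‖) _ hsq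
        intro z
        rcases eq_or_ne z x with rfl | hzx
        · simp
        · have h1 : 0 < Real.sqrt ‖z - x‖ :=
            Real.sqrt_pos.2 (norm_pos_iff.2 (sub_ne_zero.2 hzx))
          rw [norm_smul, norm_inv, Real.norm_eq_abs, abs_of_pos h1, inv_mul_le_iff₀ h1]
          refine le_of_eq ?_
          show ‖z - x‖ = Real.sqrt ‖z - x‖ * Real.sqrt ‖z - x‖
          rw [Real.mul_self_sqrt (norm_nonneg _)]
      · refine Filter.tendsto_principal.2 ?_
        filter_upwards [hmem] with z hz
        have h1 : Real.sqrt ‖z - x‖ ≠ 0 :=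
          ne_of_gt (Real.sqrt_pos.2 (norm_pos_iff.2 (sub_ne_zero.2 hz.2)))
        show x + (Real.sqrt ‖z - x‖) • ((Real.sqrt ‖z - x‖)⁻¹ • (z - x)) ∈ X
        rw [smul_inv_smul₀ h1]
        simpa using hz.1
    have hq := hd'.comp hmtend
    have hq' : Filter.Tendsto
        (fun z : EuclideanSpace ℝ (Fin l) => ((f z - f x) / Real.sqrt ‖z - x‖ : ℝ))
        (nhdsWithin x (X \ {x})) (nhds (0 : ℝ)) := by
      rw [← EReal.tendsto_coe]
      refine hq.congr' ?_
      filter_upwards [hmem] with z hz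
      have h1 : Real.sqrt ‖z - x‖ ≠ 0 :=
        ne_of_gt (Real.sqrt_pos.2 (norm_pos_iff.2 (sub_ne_zero.2 hz.2)))
      have h2 : x + (Real.sqrt ‖z - x‖) • ((Real.sqrt ‖z - x‖)⁻¹ • (z - x)) = z := by
        rw [smul_inv_smul₀ h1]; abel
      simp only [Function.comp]
      rw [h2]
    have hdiff : Filter.Tendsto (fun z : EuclideanSpace ℝ (Fin l) => f z - f x)
        (nhdsWithin x (X \ {x})) (nhds 0) := by
      have h3 := hq'.mul hsq
      rw [mul_zero] at h3
      refine h3.congr' ?_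
      filter_upwards [hmem] with z hz
      have h1 : Real.sqrt ‖z - x‖ ≠ 0 :=
        ne_of_gt (Real.sqrt_pos.2 (norm_pos_iff.2 (sub_ne_zero.2 hz.2)))
      field_simp
    have h4 := hdiff.add_const (f x)
    simpa using h4
  have hsub : X ⊆ (X \ {x}) ∪ {x} := by
    intro z hz
    by_cases hzx : z = x
    · exact Or.inr (by simp [hzx])
    · exact Or.inl ⟨hz, hzx⟩
  have hle : nhdsWithin x X ≤ nhdsWithin x ((X \ {x}) ∪ {x}) := nhdsWithin_mono x hsub
  rw [nhdsWithin_union, nhdsWithin_singleton] at hle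
  refine Filter.Tendsto.mono_left ?_ hle
  rw [Filter.tendsto_sup]
  exact ⟨key, tendsto_pure_nhds f x⟩

theorem Gset_isClosed {l m : ℕ} {X : Set (EuclideanSpace ℝ (Fin l))}
    {g : Fin m → EuclideanSpace ℝ (Fin l) → ℝ} (hX : IsClosed X)
    (hglsc : ∀ i, LowerSemicontinuous (g i)) : IsClosed (Gset X g) := by
  have h1 : Gset X g = X ∩ ⋂ i, {x | g i x ≤ 0} := by
    ext z; simp [Gset, Set.mem_iInter]
  rw [h1]
  exact hX.inter (isClosed_iInter fun i => (hglsc i).isClosed_preimage 0)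

theorem ball_subset_G {l m q : ℕ} {X : Set (EuclideanSpace ℝ (Fin l))}
    {g : Fin m → EuclideanSpace ℝ (Fin l) → ℝ}
    {hf : Fin q → EuclideanSpace ℝ (Fin l) → ℝ}
    {xbar : EuclideanSpace ℝ (Fin l)} {δ a : ℝ}
    (hX : IsClosed X) (hglsc : ∀ i, LowerSemicontinuous (g i)) (ha : 0 < a)
    (hd : ∀ x, ‖x - xbar‖ ≤ δ → x ∉ Sset X g hf → dFun hf X g x ≤ ((-a : ℝ) : EReal)) :
    ∀ x, ‖x - xbar‖ ≤ δ → x ∈ Gset X g := by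
  intro x hx
  by_cases hxS : x ∈ Sset X g hf
  · exact hxS.1
  · have h1 : dFun hf X g x < ((0 : ℝ) : EReal) :=
      lt_of_le_of_lt (hd x hx hxS) (EReal.coe_lt_coe_iff.2 (by linarith))
    rw [dFun] at h1
    obtain ⟨r, hrmem, -⟩ := sInf_lt_iff.1 h1
    obtain ⟨u, hu, -, -⟩ := hrmem
    obtain ⟨t, v, htpos, ht0, hv, hmem⟩ := hu
    have htv : Filter.Tendsto (fun k => x + t k • v k) Filter.atTop (nhds x) := by
      have := (ht0.smul hv)
      rw [zero_smul] at this
      have h2 := tendsto_const_nhds (x := x) (f := Filter.atTop (α := ℕ)) |>.add this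
      simpa using h2
    have hcl : x ∈ closure (Gset X g) :=
      mem_closure_of_tendsto htv (Filter.Eventually.of_forall hmem)
    rwa [(Gset_isClosed hX hglsc).closure_eq] at hcl

set_option maxHeartbeats 1000000 in
theorem descent_step {l m q : ℕ} {X : Set (EuclideanSpace ℝ (Fin l))}
    {g : Fin m → EuclideanSpace ℝ (Fin l) → ℝ}
    {hf : Fin q → EuclideanSpace ℝ (Fin l) → ℝ}
    {xbar : EuclideanSpace ℝ (Fin l)} {δ a : ℝ} (ha : 0 < a)
    (hd : ∀ x, ‖x - xbar‖ ≤ δ → x ∉ Sset X g hf → dFun hf X g x ≤ ((-a : ℝ) : EReal))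
    {y : EuclideanSpace ℝ (Fin l)} (hyb : ‖y - xbar‖ < δ) (hyh : 0 < hsum hf y) :
    ∃ z : EuclideanSpace ℝ (Fin l), ‖z - xbar‖ ≤ δ ∧
      hsum hf z + (a / 3) * ‖z - y‖ < hsum hf y := by
  have hyS : y ∉ Sset X g hf := by
    intro hS
    rw [hS.2] at hyh
    exact lt_irrefl _ hyh
  have h1 : dFun hf X g y < ((-a / 2 : ℝ) : EReal) :=
    lt_of_le_of_lt (hd y (le_of_lt hyb) hyS) (EReal.coe_lt_coe_iff.2 (by linarith))
  rw [dFun] at h1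
  obtain ⟨r, hrmem, hrlt⟩ := sInf_lt_iff.1 h1
  obtain ⟨u, hu, hunorm, hueq⟩ := hrmem
  rw [← hueq, lowerHadamardDeriv] at hrlt
  have hfreq := Filter.frequently_lt_of_liminf_lt (by isBoundedDefault) hrlt
  set η : ℝ := (2 / 3) * (δ - ‖y - xbar‖) with hηdef
  have hη : 0 < η := by
    rw [hηdef]; nlinarith
  have e1 : ∀ᶠ p : ℝ × EuclideanSpace ℝ (Fin l) in
      (nhdsWithin (0 : ℝ) (Set.Ioi 0)) ×ˢ nhds u,
      (0 < p.1 ∧ p.1 < η) ∧ ‖p.2 - u‖ < 1 / 2 := by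
    have a1 : ∀ᶠ t : ℝ in nhdsWithin (0 : ℝ) (Set.Ioi 0), 0 < t ∧ t < η := by
      filter_upwards [self_mem_nhdsWithin,
        mem_nhdsWithin_of_mem_nhds (Iio_mem_nhds hη)] with t h1 h2
      exact ⟨h1, h2⟩
    have a2 : ∀ᶠ v : EuclideanSpace ℝ (Fin l) in nhds u, ‖v - u‖ < 1 / 2 := by
      filter_upwards [Metric.ball_mem_nhds u (by norm_num : (0:ℝ) < 1/2)] with v hv
      simpa [dist_eq_norm] using hv
    exact a1.prod_mk a2
  have e1' : ∀ᶠ p : ℝ × EuclideanSpace ℝ (Fin l) in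
      ((nhdsWithin (0 : ℝ) (Set.Ioi 0) ×ˢ nhds u) ⊓
        Filter.principal {p : ℝ × EuclideanSpace ℝ (Fin l) | y + p.1 • p.2 ∈ X}),
      (0 < p.1 ∧ p.1 < η) ∧ ‖p.2 - u‖ < 1 / 2 :=
    e1.filter_mono inf_le_left
  obtain ⟨p, hQ, hp⟩ := (hfreq.and_eventually e1').exists
  obtain ⟨⟨ht0, htη⟩, hu'⟩ := hp
  refine ⟨y + p.1 • p.2, ?_, ?_⟩
  · have h2 : ‖p.2‖ < 3 / 2 := by
      have h3 : ‖p.2‖ ≤ ‖p.2 - u‖ + ‖u‖ := by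
        have := norm_add_le (p.2 - u) u
        simpa using this
      rw [hunorm] at h3
      linarith
    have h4 : y + p.1 • p.2 - xbar = (p.1 • p.2) + (y - xbar) := by abel
    rw [h4]
    have h5 := norm_add_le (p.1 • p.2) (y - xbar)
    have h6 : ‖p.1 • p.2‖ = p.1 * ‖p.2‖ := by
      rw [norm_smul, Real.norm_eq_abs, abs_of_pos ht0]
    nlinarith
  · have hQr : (hsum hf (y + p.1 • p.2) - hsum hf y) / p.1 < -a / 2 :=
      EReal.coe_lt_coe_iff.1 hQ
    rw [div_lt_iff₀ ht0] at hQr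
    have h2 : ‖p.2‖ < 3 / 2 := by
      have h3 : ‖p.2‖ ≤ ‖p.2 - u‖ + ‖u‖ := by
        have := norm_add_le (p.2 - u) u
        simpa using this
      rw [hunorm] at h3
      linarith
    have h6 : ‖y + p.1 • p.2 - y‖ = p.1 * ‖p.2‖ := by
      have h7 : y + p.1 • p.2 - y = p.1 • p.2 := by abel
      rw [h7, norm_smul, Real.norm_eq_abs, abs_of_pos ht0]
    rw [h6]
    have h8 : (a/3) * (p.1 * ‖p.2‖) ≤ (a/3) * (p.1 * (3/2)) := by
      have : p.1 * ‖p.2‖ ≤ p.1 * (3/2) :=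
        mul_le_mul_of_nonneg_left (le_of_lt h2) (le_of_lt ht0)
      exact mul_le_mul_of_nonneg_left this (by positivity)
    nlinarith

theorem hsum_nonneg {l q : ℕ} (hf : Fin q → EuclideanSpace ℝ (Fin l) → ℝ)
    (x : EuclideanSpace ℝ (Fin l)) : 0 ≤ hsum hf x :=
  Finset.sum_nonneg fun j _ => sq_nonneg _

theorem reach_S {l m q : ℕ} {X : Set (EuclideanSpace ℝ (Fin l))}
    {g : Fin m → EuclideanSpace ℝ (Fin l) → ℝ}
    {hf : Fin q → EuclideanSpace ℝ (Fin l) → ℝ}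
    {xbar : EuclideanSpace ℝ (Fin l)} {δ a : ℝ} (ha : 0 < a) (hδ : 0 < δ)
    (hd : ∀ x, ‖x - xbar‖ ≤ δ → x ∉ Sset X g hf → dFun hf X g x ≤ ((-a : ℝ) : EReal))
    (hballG : ∀ z, ‖z - xbar‖ ≤ δ → z ∈ Gset X g)
    (hcont : ContinuousOn (hsum hf) X)
    {x₀ : EuclideanSpace ℝ (Fin l)} (hx0 : ‖x₀ - xbar‖ ≤ δ / 4)
    (hsmall : (3 / a) * hsum hf x₀ ≤ δ / 2) :
    ∃ y : EuclideanSpace ℝ (Fin l), hsum hf y = 0 ∧ ‖y - x₀‖ ≤ (3 / a) * hsum hf x₀ := by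
  set K : Set (EuclideanSpace ℝ (Fin l)) := Metric.closedBall xbar δ with hK
  have hKmem : ∀ z : EuclideanSpace ℝ (Fin l), z ∈ K ↔ ‖z - xbar‖ ≤ δ := by
    intro z; rw [hK, Metric.mem_closedBall, dist_eq_norm]
  have hKX : K ⊆ X := fun z hz => (hballG z ((hKmem z).1 hz)).1
  have hψcont : ContinuousOn (fun z => hsum hf z + (a / 3) * ‖z - x₀‖) K := by
    refine ContinuousOn.add (hcont.mono hKX) ?_
    exact (continuous_const.mul ((continuous_id.sub continuous_const).norm)).continuousOn
  have hx0K : x₀ ∈ K := (hKmem x₀).2 (by linarith)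
  obtain ⟨y, hyK, hymin⟩ := (isCompact_closedBall xbar δ).exists_isMinOn ⟨x₀, hx0K⟩ hψcont
  have hyineq : hsum hf y + (a / 3) * ‖y - x₀‖ ≤ hsum hf x₀ := by
    have := hymin hx0K
    simpa using this
  have hy0 := hsum_nonneg hf y
  have hyx0 : ‖y - x₀‖ ≤ (3 / a) * hsum hf x₀ := by
    rw [div_mul_eq_mul_div, le_div_iff₀ ha]
    nlinarith
  have hyb : ‖y - xbar‖ < δ := by
    have h1 : ‖y - xbar‖ ≤ ‖y - x₀‖ + ‖x₀ - xbar‖ := by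
      have h2 : y - xbar = (y - x₀) + (x₀ - xbar) := by abel
      rw [h2]; exact norm_add_le _ _
    linarith
  refine ⟨y, ?_, hyx0⟩
  by_contra hy
  have hypos : 0 < hsum hf y := lt_of_le_of_ne hy0 (Ne.symm hy)
  obtain ⟨z, hzb, hzlt⟩ := descent_step ha hd hyb hypos
  have hzK : z ∈ K := (hKmem z).2 hzb
  have h3 : hsum hf y + (a / 3) * ‖y - x₀‖ ≤ hsum hf z + (a / 3) * ‖z - x₀‖ := by
    have := hymin hzK
    simpa using this
  have h4 : ‖z - x₀‖ ≤ ‖z - y‖ + ‖y - x₀‖ := by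
    have h5 : z - x₀ = (z - y) + (y - x₀) := by abel
    rw [h5]; exact norm_add_le _ _
  nlinarith

set_option maxHeartbeats 1600000 in
/-- Theorem 2.1 (exact penalty): under the stated hypotheses there is an integer `s` such
that `xbar` is a local minimizer of `F(·,γ)` over `G` for every `γ > s`. -/
theorem exact_penalty
    {l m q : ℕ}
    {X : Set (EuclideanSpace ℝ (Fin l))}
    {f : EuclideanSpace ℝ (Fin l) → ℝ}
    {g : Fin m → EuclideanSpace ℝ (Fin l) → ℝ}
    {hf : Fin q → EuclideanSpace ℝ (Fin l) → ℝ}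
    {xbar : EuclideanSpace ℝ (Fin l)}
    {δ L a : ℝ}
    (hX : IsClosed X)
    (hfeas : xbar ∈ Sset X g hf)
    (hlocmin : ∃ ε > (0 : ℝ), ∀ x ∈ Sset X g hf, ‖x - xbar‖ ≤ ε → f xbar ≤ f x)
    (hδ : 0 < δ)
    (hLip : ∀ x ∈ {y | ‖y - xbar‖ ≤ δ} ∩ X, ∀ y ∈ {y | ‖y - xbar‖ ≤ δ} ∩ X,
      |f x - f y| ≤ L * ‖x - y‖)
    (hglsc : ∀ i, LowerSemicontinuous (g i))
    (hhdiff : ∀ j, ∀ x ∈ X, ∀ u, ∃ d : EReal, HasHadamardDerivAt (hf j) X x u d)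
    (hhlsc : ∀ j, LowerSemicontinuous (hf j))
    (ha : 0 < a)
    (hd : ∀ x, ‖x - xbar‖ ≤ δ → x ∉ Sset X g hf → dFun hf X g x ≤ ((-a : ℝ) : EReal)) :
    ∃ s : ℤ, ∀ γ : ℝ, (s : ℝ) < γ →
      ∃ ε > (0 : ℝ), ∀ x ∈ Gset X g, ‖x - xbar‖ ≤ ε →
        Fpen f hf xbar γ xbar ≤ Fpen f hf xbar γ x := by

  obtain ⟨ε₀, hε₀, hmin⟩ := hlocmin
  have hballG : ∀ z, ‖z - xbar‖ ≤ δ → z ∈ Gset X g := ball_subset_G hX hglsc ha hd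
  have hcont : ContinuousOn (hsum hf) X := by
    apply continuousOn_finset_sum
    intro j _
    intro z hz
    exact (hadamard_cont hz (hhdiff j z hz 0)).pow 2
  have hxbar0 : hsum hf xbar = 0 := hfeas.2
  set c : ℝ := (a / 3) * min (δ / 4) (ε₀ / 2) with hc
  have hcpos : 0 < c := by
    rw [hc]; positivity
  set ε : ℝ := min (min (δ / 4) (ε₀ / 2)) (c / (|L| + 1)) with hε
  have hεpos : 0 < ε := by
    rw [hε]
    refine lt_min (lt_min (by linarith) (by linarith)) ?_
    positivity
  refine ⟨max (⌈3 * L / a⌉ + 1) 1, fun γ hγ => ⟨ε, hεpos, fun x hxG hxε => ?_⟩⟩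
  have hγ1 : 1 < γ := by
    have h1 : ((1 : ℤ) : ℝ) ≤ ((max (⌈3 * L / a⌉ + 1) 1 : ℤ) : ℝ) :=
      Int.cast_le.2 (le_max_right _ _)
    have h2 := lt_of_le_of_lt h1 hγ
    simpa using h2
  have hγL : 3 * L / a < γ := by
    have h1 : ((⌈3 * L / a⌉ + 1 : ℤ) : ℝ) ≤ ((max (⌈3 * L / a⌉ + 1) 1 : ℤ) : ℝ) :=
      Int.cast_le.2 (le_max_left _ _)
    have h2 := Int.le_ceil (3 * L / a)
    have h3 := lt_of_le_of_lt h1 hγ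
    have h4 : ((⌈3 * L / a⌉ + 1 : ℤ) : ℝ) = ((⌈3 * L / a⌉ : ℤ) : ℝ) + 1 := by push_cast; ring
    linarith
  have hx0 := hsum_nonneg hf x
  have hεδ4 : ε ≤ δ / 4 := le_trans (min_le_left _ _) (min_le_left _ _)
  have hεε0 : ε ≤ ε₀ / 2 := le_trans (min_le_left _ _) (min_le_right _ _)
  have hεc : ε ≤ c / (|L| + 1) := min_le_right _ _
  have hxδ : ‖x - xbar‖ ≤ δ := by linarith
  have hxX : x ∈ X := hxG.1
  have hxbarX : xbar ∈ X := hfeas.1.1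
  have hxbarball : ‖xbar - xbar‖ ≤ δ := by simp; linarith
  -- Lipschitz bound between xbar and x
  have hLipx : |f xbar - f x| ≤ L * ‖xbar - x‖ :=
    hLip xbar ⟨hxbarball, hxbarX⟩ x ⟨hxδ, hxX⟩
  have hLabs : 0 ≤ |L| + 1 := by positivity
  have hFxbar : Fpen f hf xbar γ xbar = f xbar := by
    simp [Fpen, hxbar0]
  rw [hFxbar]
  have hFx : Fpen f hf xbar γ x = f x + γ * hsum hf x + (1 / 2) * ‖x - xbar‖ ^ 2 := rfl
  rw [hFx]
  have hnormsq : 0 ≤ (1 / 2) * ‖x - xbar‖ ^ 2 := by positivity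
  rcases le_or_gt c (hsum hf x) with hcase | hcase
  · -- large violation case
    have h1 : f xbar - f x ≤ L * ‖xbar - x‖ := le_trans (le_abs_self _) hLipx
    have h2 : L * ‖xbar - x‖ ≤ |L| * ε := by
      have h3 : ‖xbar - x‖ ≤ ε := by
        rw [norm_sub_rev]; exact hxε
      calc L * ‖xbar - x‖ ≤ |L| * ‖xbar - x‖ :=
            mul_le_mul_of_nonneg_right (le_abs_self L) (norm_nonneg _)
        _ ≤ |L| * ε := mul_le_mul_of_nonneg_left h3 (abs_nonneg L)
    have h4 : |L| * ε ≤ c := by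
      have h5 : |L| * ε ≤ |L| * (c / (|L| + 1)) :=
        mul_le_mul_of_nonneg_left hεc (abs_nonneg L)
      have h6 : |L| * (c / (|L| + 1)) ≤ c := by
        rw [mul_div_assoc']
        rw [div_le_iff₀ (by positivity : (0:ℝ) < |L| + 1)]
        nlinarith [abs_nonneg L, hcpos.le]
      linarith
    have h7 : hsum hf x ≤ γ * hsum hf x := by nlinarith
    linarith
  · -- small violation case : go to S
    have hsmall : (3 / a) * hsum hf x ≤ δ / 2 := by
      have h1 : (3 / a) * hsum hf x ≤ (3 / a) * c :=
        mul_le_mul_of_nonneg_left hcase.le (by positivity)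
      have h2 : (3 / a) * c = min (δ / 4) (ε₀ / 2) := by
        rw [hc]; field_simp
      rw [h2] at h1
      have := min_le_left (δ / 4) (ε₀ / 2)
      linarith
    obtain ⟨y, hy0, hyx⟩ := reach_S ha hδ hd hballG hcont (le_trans hxε hεδ4) hsmall
    have h3a : (3 / a) * hsum hf x ≤ min (δ / 4) (ε₀ / 2) := by
      have h1 : (3 / a) * hsum hf x ≤ (3 / a) * c :=
        mul_le_mul_of_nonneg_left hcase.le (by positivity)
      have h2 : (3 / a) * c = min (δ / 4) (ε₀ / 2) := by
        rw [hc]; field_simp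
      linarith [h1, h2.le]
    have hyxbar : ‖y - xbar‖ ≤ ε + min (δ / 4) (ε₀ / 2) := by
      have h1 : y - xbar = (y - x) + (x - xbar) := by abel
      have h2 := norm_add_le (y - x) (x - xbar)
      rw [← h1] at h2
      linarith [le_trans hyx h3a]
    have hyδ : ‖y - xbar‖ ≤ δ := by
      have := min_le_left (δ / 4) (ε₀ / 2)
      linarith
    have hyε₀ : ‖y - xbar‖ ≤ ε₀ := by
      have := min_le_right (δ / 4) (ε₀ / 2)
      linarith
    have hyS : y ∈ Sset X g hf := ⟨hballG y hyδ, hy0⟩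
    have h5 : f xbar ≤ f y := hmin y hyS hyε₀
    have h6 : |f y - f x| ≤ L * ‖y - x‖ :=
      hLip y ⟨hyδ, (hballG y hyδ).1⟩ x ⟨hxδ, hxX⟩
    have h7 : f y - f x ≤ L * ‖y - x‖ := le_trans (le_abs_self _) h6
    have h8 : L * ‖y - x‖ ≤ γ * hsum hf x := by
      rcases le_or_gt L 0 with hL | hL
      · have h9 : L * ‖y - x‖ ≤ 0 := mul_nonpos_of_nonpos_of_nonneg hL (norm_nonneg _)
        nlinarith
      · have h9 : L * ‖y - x‖ ≤ L * ((3 / a) * hsum hf x) :=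
          mul_le_mul_of_nonneg_left hyx hL.le
        have h10 : L * ((3 / a) * hsum hf x) = (3 * L / a) * hsum hf x := by ring
        nlinarith
    linarith
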